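/- If (p_n) is a sequence of probability densities and p a probability density, all with respect to a σ-finite measure μ, such that TV(p_n, p) → 0, then for every α ∈ (0,1) the Rényi α-divergence D_α(p_n, p) → 0 as n → ∞. -/
import Mathlib


open MeasureTheory Filter

/-- Convergence in total variation implies convergence of every Rényi α-divergence. -/
theorem tv_to_zero_implies_renyi_to_zero {Ω : Type*} [MeasurableSpace Ω]
    (μ : Measure Ω) [SigmaFinite μ]
    (p : ℕ → Ω → ℝ) (q : Ω → ℝ)
    (hmp : ∀ n, Measurable (p n)) (hmq : Measurable q)
    (hpnn : ∀ n x, 0 ≤ p n x) (hqnn : ∀ x, 0 ≤ q x)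
    (hip : ∀ n, ∫ x, p n x ∂μ = 1) (hiq : ∫ x, q x ∂μ = 1)
    (hTV : Tendsto (fun n => (1 / 2) * ∫ x, |p n x - q x| ∂μ) atTop (nhds 0)) :
    ∀ a : ℝ, 0 < a → a < 1 →
      Tendsto (fun n => (1 - ∫ x, p n x ^ a * q x ^ (1 - a) ∂μ) / (a * (1 - a)))
        atTop (nhds 0) := by
  intro a ha ha1
  have ha1' : 0 < 1 - a := by linarith
  have hc : 0 < a * (1 - a) := mul_pos ha ha1'
  -- integrability of q and p n
  have hq_int : Integrable q μ := by
    by_contra h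
    rw [integral_undef h] at hiq; norm_num at hiq
  have hp_int : ∀ n, Integrable (p n) μ := by
    intro n; by_contra h
    have := hip n
    rw [integral_undef h] at this; norm_num at this
  -- pointwise upper bound (AM-GM)
  have hub : ∀ n x, p n x ^ a * q x ^ (1 - a) ≤ a * p n x + (1 - a) * q x := by
    intro n x
    exact Real.geom_mean_le_arith_mean2_weighted ha.le ha1'.le (hpnn n x) (hqnn x) (by ring)
  -- pointwise lower bound
  have hlb : ∀ n x, min (p n x) (q x) ≤ p n x ^ a * q x ^ (1 - a) := by
    intro n x
    have hmn : (0:ℝ) ≤ min (p n x) (q x) := le_min (hpnn n x) (hqnn x)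
    have : min (p n x) (q x) = min (p n x) (q x) ^ a * min (p n x) (q x) ^ (1 - a) := by
      rw [← Real.rpow_add' hmn (by norm_num)]
      simp
    rw [this]
    exact mul_le_mul (Real.rpow_le_rpow hmn (min_le_left _ _) ha.le)
      (Real.rpow_le_rpow hmn (min_le_right _ _) ha1'.le)
      (Real.rpow_nonneg hmn _) (Real.rpow_nonneg (hpnn n x) _)
  -- integrability of the geometric mean
  have hf_meas : ∀ n, Measurable fun x => p n x ^ a * q x ^ (1 - a) := by
    intro n
    exact (((Real.continuous_rpow_const ha.le).measurable).comp (hmp n)).mul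
      (((Real.continuous_rpow_const ha1'.le).measurable).comp hmq)
  have hbound_int : ∀ n, Integrable (fun x => a * p n x + (1 - a) * q x) μ := fun n =>
    ((hp_int n).const_mul a).add (hq_int.const_mul (1 - a))
  have hf_int : ∀ n, Integrable (fun x => p n x ^ a * q x ^ (1 - a)) μ := by
    intro n
    refine (hbound_int n).mono' (hf_meas n).aestronglyMeasurable ?_
    filter_upwards with x
    rw [Real.norm_eq_abs, abs_of_nonneg (mul_nonneg (Real.rpow_nonneg (hpnn n x) _) (Real.rpow_nonneg (hqnn x) _))]
    exact hub n x
  -- integrability of min and |p - q|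
  have hmin_int : ∀ n, Integrable (fun x => min (p n x) (q x)) μ := by
    intro n
    refine (hp_int n).mono' ((hmp n).min hmq).aestronglyMeasurable ?_
    filter_upwards with x
    rw [Real.norm_eq_abs, abs_of_nonneg (le_min (hpnn n x) (hqnn x))]
    exact min_le_left _ _
  have habs_int : ∀ n, Integrable (fun x => |p n x - q x|) μ := fun n =>
    ((hp_int n).sub hq_int).abs
  -- upper bound on the integral: ≤ 1
  have hIle1 : ∀ n, ∫ x, p n x ^ a * q x ^ (1 - a) ∂μ ≤ 1 := by
    intro n
    calc ∫ x, p n x ^ a * q x ^ (1 - a) ∂μ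
        ≤ ∫ x, a * p n x + (1 - a) * q x ∂μ :=
          integral_mono (hf_int n) (hbound_int n) (hub n)
      _ = a * ∫ x, p n x ∂μ + (1 - a) * ∫ x, q x ∂μ := by
          rw [integral_add ((hp_int n).const_mul a) (hq_int.const_mul (1 - a)),
            integral_const_mul, integral_const_mul]
      _ = 1 := by rw [hip n, hiq]; ring
  -- integral of min
  have hmin_eq : ∀ n, ∫ x, min (p n x) (q x) ∂μ = 1 - (1 / 2) * ∫ x, |p n x - q x| ∂μ := by
    intro n
    have heq : (fun x => min (p n x) (q x)) =
        fun x => (p n x + q x - |p n x - q x|) / 2 := by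
      funext x
      rcases le_total (p n x) (q x) with h | h
      · rw [min_eq_left h, abs_of_nonpos (by linarith)]; ring
      · rw [min_eq_right h, abs_of_nonneg (by linarith)]; ring
    rw [heq]
    have h1 : Integrable (fun x => p n x + q x) μ := (hp_int n).add hq_int
    rw [integral_div, integral_sub h1 (habs_int n),
      integral_add (hp_int n) hq_int, hip n, hiq]
    ring
  -- lower bound on the integral
  have hIge : ∀ n, 1 - (1 / 2) * ∫ x, |p n x - q x| ∂μ ≤ ∫ x, p n x ^ a * q x ^ (1 - a) ∂μ := by
    intro n
    rw [← hmin_eq n]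
    exact integral_mono (hmin_int n) (hf_int n) (hlb n)
  -- squeeze
  have hup : Tendsto (fun n => ((1 / 2) * ∫ x, |p n x - q x| ∂μ) / (a * (1 - a)))
      atTop (nhds 0) := by
    simpa using hTV.div_const (a * (1 - a))
  refine tendsto_of_tendsto_of_tendsto_of_le_of_le tendsto_const_nhds hup ?_ ?_
  · intro n
    exact div_nonneg (by linarith [hIle1 n]) hc.le
  · intro n
    exact (div_le_div_iff_of_pos_right hc).mpr (by linarith [hIge n])
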